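/- arXiv:1005.1183 — 3 statements merged into one kernel-verified Lean document; each statement's English description precedes it below -/
import Mathlib

section
/- Let ρ, σ ∈ ℝ satisfy 1 − σ² > 0 and 1 − 2ρ² + σ > 0, and set ξ = 1 − 2ρ² + σ, η = (1+σ)/(1−σ), λ = 1/√(1−σ), κ = 1/√(1−2ρ²+σ). Fix u, v ∈ ℝ and let A = 2λρ − κξ(u−v) + iλξ(u+v) and B = 2λρ + κξ(u−v) + iλξ(u+v) in ℂ. If A ≠ 0, then there exist z₁, z₂ ∈ ℂ such that Az² − 2√(2η)·z + B = A(z − z₁)(z − z₂) for all z ∈ ℂ, with |z₁| < 1 and |z₂| > 1. -/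
set_option maxHeartbeats 1000000

theorem poles_inside_outside (ρ σ : ℝ) (h1 : 1 - σ ^ 2 > 0) (h2 : 1 - 2 * ρ ^ 2 + σ > 0)
    (ξ η lam kap : ℝ) (hξ : ξ = 1 - 2 * ρ ^ 2 + σ) (hη : η = (1 + σ) / (1 - σ))
    (hlam : lam = 1 / Real.sqrt (1 - σ)) (hkap : kap = 1 / Real.sqrt (1 - 2 * ρ ^ 2 + σ))
    (u v : ℝ) (A B : ℂ)
    (hA : A = 2 * lam * ρ - kap * ξ * ((u : ℂ) - v) + Complex.I * lam * ξ * ((u : ℂ) + v))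
    (hB : B = 2 * lam * ρ + kap * ξ * ((u : ℂ) - v) + Complex.I * lam * ξ * ((u : ℂ) + v))
    (hA0 : A ≠ 0) :
    ∃ z₁ z₂ : ℂ,
      (∀ z : ℂ, A * z ^ 2 - 2 * (Real.sqrt (2 * η) : ℂ) * z + B = A * (z - z₁) * (z - z₂)) ∧
      ‖z₁‖ < 1 ∧ 1 < ‖z₂‖ := by
  have hσ : (0:ℝ) < 1 - σ := by nlinarith
  have hσ' : (0:ℝ) < 1 + σ := by nlinarith
  have hξpos : (0:ℝ) < ξ := by rw [hξ]; linarith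
  have hηpos : (0:ℝ) < η := by rw [hη]; positivity
  set p : ℝ := 2 * lam * ρ with hp
  set q : ℝ := lam * ξ * (u + v) with hq
  set r : ℝ := kap * ξ * (u - v) with hr
  have hlam2 : lam ^ 2 = 1 / (1 - σ) := by
    rw [hlam, div_pow, one_pow, Real.sq_sqrt hσ.le]
  have hl : lam ^ 2 * (1 - σ) = 1 := by rw [hlam2]; field_simp
  set c : ℝ := Real.sqrt (2 * η) with hc
  have hcpos : 0 < c := Real.sqrt_pos.mpr (by linarith)
  set aa : ℝ := 2 * lam ^ 2 * ξ with haa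
  have haapos : 0 < aa := by rw [haa, hlam2]; positivity
  have hc2 : c ^ 2 = p ^ 2 + aa := by
    rw [hc, Real.sq_sqrt (by linarith : (0:ℝ) ≤ 2 * η), hη, hp, haa, hξ]
    field_simp
    linear_combination (-(1:ℝ) - σ) * hl
  have hAre : A.re = p - r := by rw [hA]; simp; rfl
  have hAim : A.im = q := by rw [hA]; simp; rfl
  have hBre : B.re = p + r := by rw [hB]; simp; rfl
  have hBim : B.im = q := by rw [hB]; simp; rfl
  clear_value p q r c aa
  clear hp hq hr hc haa hlam hkap hη hξ hlam2 hl hA hB h1 h2 hσ hσ' hξpos hηpos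
  set D : ℂ := (c : ℂ) ^ 2 - A * B with hD
  have hDre : D.re = aa + q ^ 2 + r ^ 2 := by
    have h' : D.re = c ^ 2 - (A.re * B.re - A.im * B.im) := by
      rw [hD]; simp [Complex.mul_re, pow_two]
    rw [h', hAre, hAim, hBre, hBim, hc2]; ring
  have hDim : D.im = -(2 * p * q) := by
    have h' : D.im = -(A.re * B.im + A.im * B.re) := by
      rw [hD]; simp [Complex.mul_im, pow_two]
    rw [h', hAre, hAim, hBre, hBim]; ring
  set S : ℝ := ‖D‖ with hS
  have hS2 : S ^ 2 = (aa + q ^ 2 + r ^ 2) ^ 2 + (2 * p * q) ^ 2 := by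
    rw [hS, Complex.sq_norm, Complex.normSq_apply, hDre, hDim]; ring
  have hSX : aa + q ^ 2 + r ^ 2 ≤ S := by rw [hS, ← hDre]; exact Complex.re_le_norm D
  have hXpos : (0:ℝ) < aa + q ^ 2 + r ^ 2 := by positivity
  clear_value S
  clear hS
  set Rw : ℝ := Real.sqrt ((S + (aa + q ^ 2 + r ^ 2)) / 2) with hRw
  have hRwpos : 0 < Rw := Real.sqrt_pos.mpr (by linarith)
  have hRw2 : Rw ^ 2 = (S + (aa + q ^ 2 + r ^ 2)) / 2 := Real.sq_sqrt (by linarith)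
  clear_value Rw
  clear hRw
  set Iw : ℝ := -(2 * p * q) / (2 * Rw) with hIw
  have hIw2 : Iw ^ 2 = (S - (aa + q ^ 2 + r ^ 2)) / 2 := by
    rw [hIw, div_pow, div_eq_iff (by positivity : ((2:ℝ) * Rw) ^ 2 ≠ 0)]
    rw [mul_pow]
    linear_combination -hS2 - 2 * (S - (aa + q ^ 2 + r ^ 2)) * hRw2
  have hIwRw : 2 * Rw * Iw = -(2 * p * q) := by
    rw [hIw]
    field_simp
  clear_value Iw
  clear hIw
  set w : ℂ := (Rw : ℂ) + (Iw : ℂ) * Complex.I with hwdef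
  have hwre : w.re = Rw := by rw [hwdef]; simp
  have hwim : w.im = Iw := by rw [hwdef]; simp
  have hw2 : w ^ 2 = D := by
    apply Complex.ext
    · rw [pow_two, Complex.mul_re, hwre, hwim, hDre]
      linear_combination hRw2 - hIw2
    · rw [pow_two, Complex.mul_im, hwre, hwim, hDim]
      linear_combination hIwRw
  clear_value w
  clear hwdef
  have habsw : Rw ^ 2 + Iw ^ 2 = S := by rw [hRw2, hIw2]; ring
  have hApos : 0 < ‖A‖ := norm_pos_iff.mpr hA0
  obtain ⟨MA, hMA⟩ : ∃ x : ℝ, (p - r) ^ 2 + q ^ 2 = x := ⟨_, rfl⟩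
  have habsA2 : ‖A‖ ^ 2 = MA := by
    rw [Complex.sq_norm, Complex.normSq_apply, hAre, hAim, ← hMA]; ring
  have hMApos : (0:ℝ) < MA := by rw [← habsA2]; positivity
  obtain ⟨T, hT⟩ : ∃ x : ℝ, c ^ 2 + S - MA = x := ⟨_, rfl⟩
  obtain ⟨s, hs⟩ : ∃ x : ℝ, 2 * c * Rw = x := ⟨_, rfl⟩
  have hspos : 0 < s := by rw [← hs]; positivity
  have hid : s ^ 2 - T ^ 2 = 2 * MA * (S - (aa + q ^ 2 + r ^ 2) + 2 * aa) := by
    rw [← hs, ← hT, ← hMA, mul_pow, mul_pow, hRw2, hc2]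
    linear_combination -hS2
  have hidpos : 0 < s ^ 2 - T ^ 2 := by
    rw [hid]
    have h5 : 0 < S - (aa + q ^ 2 + r ^ 2) + 2 * aa := by linarith
    positivity
  have key : T ^ 2 < s ^ 2 := by linarith
  have habsT : |T| < s :=
    lt_of_pow_lt_pow_left₀ 2 hspos.le (by rw [sq_abs]; exact key)
  obtain ⟨habslt1, habslt2⟩ := abs_lt.mp habsT
  refine ⟨((c : ℂ) - w) / A, ((c : ℂ) + w) / A, ?_, ?_, ?_⟩
  · intro z
    have hwD : w ^ 2 = (c : ℂ) ^ 2 - A * B := hw2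
    field_simp
    ring_nf
    linear_combination hwD
  · rw [norm_div, div_lt_one hApos]
    apply lt_of_pow_lt_pow_left₀ 2 (norm_nonneg A)
    rw [habsA2, Complex.sq_norm, Complex.normSq_apply, Complex.sub_re, Complex.sub_im,
      hwre, hwim, Complex.ofReal_re, Complex.ofReal_im]
    have e : (c - Rw) * (c - Rw) + (0 - Iw) * (0 - Iw) = c ^ 2 + S - (2 * c * Rw) := by
      linear_combination habsw
    rw [e, hs]
    linarith [hT]
  · rw [norm_div, lt_div_iff₀ hApos, one_mul]
    apply lt_of_pow_lt_pow_left₀ 2 (norm_nonneg _)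
    rw [habsA2, Complex.sq_norm, Complex.normSq_apply, Complex.add_re, Complex.add_im,
      hwre, hwim, Complex.ofReal_re, Complex.ofReal_im]
    have e : (c + Rw) * (c + Rw) + (0 + Iw) * (0 + Iw) = c ^ 2 + S + 2 * c * Rw := by
      linear_combination habsw
    rw [e, hs]
    linarith [hT]
end

section
/- Let ρ, σ ∈ ℝ satisfy 1 − σ² > 0 and 1 − 2ρ² + σ > 0, and set ξ = 1 − 2ρ² + σ, η = (1+σ)/(1−σ), λ = 1/√(1−σ), κ = 1/√(1−2ρ²+σ), δ = 2ρ/ξ. Then for all u, v ∈ ℝ, ∫₀^{2π} [2λρ cos θ + iλξ(u+v) cos θ − iκξ(u−v) sin θ − √(2η)]^{−1} dθ = −2π / √(λ²ξ²(u+v−iδ)² + κ²ξ²(−u+v)² + 2η), where √· on ℂ denotes the principal square root. -/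
set_option maxHeartbeats 1000000
open Complex

lemma cpow_half_mul_self {R : ℂ} (h : R ≠ 0) : R ^ ((1:ℂ)/2) * R ^ ((1:ℂ)/2) = R := by
  rw [← Complex.cpow_add _ _ h]; norm_num

lemma cpow_half_re_pos {R : ℂ} (h : 0 < R.re) : 0 < (R ^ ((1:ℂ)/2)).re := by
  have hR0 : R ≠ 0 := by intro h0; rw [h0] at h; simp at h
  rw [Complex.cpow_def_of_ne_zero hR0, Complex.exp_re]
  apply mul_pos (Real.exp_pos _)
  have harg : |Complex.arg R| < Real.pi / 2 := Complex.abs_arg_lt_pi_div_two_iff.2 (Or.inl h)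
  have him : (Complex.log R * ((1:ℂ)/2)).im = Complex.arg R / 2 := by
    simp [Complex.mul_im, Complex.log_im]; ring
  rw [him]
  apply Real.cos_pos_of_mem_Ioo
  obtain ⟨hl, hr⟩ := abs_lt.1 harg
  constructor
  · linarith [Real.pi_pos]
  · linarith [Real.pi_pos]

lemma alg_ident (S w m n P ν μ E E' : ℂ) (hP : P ≠ 0) (hw0 : w ≠ 0)
    (hPdef : P = S + w) (hν : ν = n / P) (hμ : μ = m / P)
    (hw2 : w * w = S ^ 2 - m * n) (hEE : E * E' = 1)
    (hA : 1 - ν * E ≠ 0) (hB : 1 - μ * E' ≠ 0) :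
    -w⁻¹ * (1 + Complex.I * (-(ν * (Complex.I * E)) / (1 - ν * E))
      - Complex.I * (-(μ * -(Complex.I * E')) / (1 - μ * E')))
      * (-(P / 2) * (1 - ν * E) * (1 - μ * E')) = 1 := by
  have hI : Complex.I * Complex.I = -1 := Complex.I_mul_I
  subst hν hμ hPdef
  have hA' : S + w - n * E ≠ 0 := by
    intro h; apply hA
    have h2 : 1 - n / (S + w) * E = (S + w - n * E) / (S + w) := by field_simp
    rw [h2, h, zero_div]
  have hB' : S + w - m * E' ≠ 0 := by
    intro h; apply hB
    have h2 : 1 - m / (S + w) * E' = (S + w - m * E') / (S + w) := by field_simp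
    rw [h2, h, zero_div]
  have hden : w * ((S + w) * (S + w - n * E) * (S + w - m * E')) * (2 * (S + w) * (S + w)) ≠ 0 := by
    apply mul_ne_zero
    · exact mul_ne_zero hw0 (mul_ne_zero (mul_ne_zero hP hA') hB')
    · exact mul_ne_zero (mul_ne_zero two_ne_zero hP) hP
  field_simp [hA', hB']
  linear_combination
    (-(n*E*(S+w-m*E')) - (S+w-n*E)*m*E') * hI + (-(m*n)) * hEE - hw2

lemma aux_integral (S m n w : ℂ) (hw2 : w * w = S ^ 2 - m * n)
    (hw0 : w ≠ 0) (hP : S + w ≠ 0)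
    (hm : ‖m‖ < ‖S + w‖)
    (hn : ‖n‖ < ‖S + w‖) :
    (∫ θ in (0:ℝ)..(2 * Real.pi),
      (n / 2 * Complex.exp (Complex.I * θ) + m / 2 * Complex.exp (-(Complex.I * θ)) - S)⁻¹)
      = -(2 * Real.pi) / w := by
  set P := S + w with hPdef
  set ν := n / P with hνdef
  set μ := m / P with hμdef
  have hPa : 0 < ‖P‖ := by
    simpa [norm_pos_iff] using hP
  have hνa : ‖ν‖ < 1 := by
    rw [hνdef, norm_div, div_lt_one hPa]; exact hn
  have hμa : ‖μ‖ < 1 := by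
    rw [hμdef, norm_div, div_lt_one hPa]; exact hm
  have hexp1 : ∀ θ : ℝ, ‖Complex.exp (Complex.I * θ)‖ = 1 := by
    intro θ; rw [Complex.norm_exp]; simp
  have hexp2 : ∀ θ : ℝ, ‖Complex.exp (-(Complex.I * θ))‖ = 1 := by
    intro θ; rw [Complex.norm_exp]; simp
  have key : ∀ (z e : ℂ), ‖z‖ < 1 → ‖e‖ = 1 → 0 < (1 - z * e).re := by
    intro z e hz he
    have h1 : (z * e).re ≤ ‖z * e‖ := Complex.re_le_norm _
    have h2 : ‖z * e‖ = ‖z‖ := by rw [norm_mul, he, mul_one]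
    simp only [Complex.sub_re, Complex.one_re]
    linarith [h2 ▸ h1]
  have h1pos : ∀ θ : ℝ, 0 < (1 - ν * Complex.exp (Complex.I * θ)).re :=
    fun θ => key _ _ hνa (hexp1 θ)
  have h2pos : ∀ θ : ℝ, 0 < (1 - μ * Complex.exp (-(Complex.I * θ))).re :=
    fun θ => key _ _ hμa (hexp2 θ)
  have h1ne : ∀ θ : ℝ, (1 - ν * Complex.exp (Complex.I * θ)) ≠ 0 := by
    intro θ h; have := h1pos θ; rw [h] at this; simp at this
  have h2ne : ∀ θ : ℝ, (1 - μ * Complex.exp (-(Complex.I * θ))) ≠ 0 := by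
    intro θ h; have := h2pos θ; rw [h] at this; simp at this
  set D : ℝ → ℂ := fun θ =>
    n / 2 * Complex.exp (Complex.I * θ) + m / 2 * Complex.exp (-(Complex.I * θ)) - S with hDdef
  have hEE : ∀ θ : ℝ, Complex.exp (Complex.I * θ) * Complex.exp (-(Complex.I * θ)) = 1 := by
    intro θ; rw [← Complex.exp_add]; simp
  have hfact : ∀ θ : ℝ, D θ =
      -(P / 2) * (1 - ν * Complex.exp (Complex.I * θ)) * (1 - μ * Complex.exp (-(Complex.I * θ))) := by
    intro θ
    have hmn : m * n = (S - w) * P := by rw [hPdef]; linear_combination hw2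
    rw [hDdef]
    simp only [hνdef, hμdef]
    field_simp
    linear_combination (m * n) * hEE θ + hw2 + (P - S + w) * hPdef
  have hDne : ∀ θ : ℝ, D θ ≠ 0 := by
    intro θ
    rw [hfact θ]
    exact mul_ne_zero (mul_ne_zero (by simpa using hP) (h1ne θ)) (h2ne θ)
  set F : ℝ → ℂ := fun θ =>
    -w⁻¹ * ((θ : ℂ) + Complex.I * Complex.log (1 - ν * Complex.exp (Complex.I * θ))
      - Complex.I * Complex.log (1 - μ * Complex.exp (-(Complex.I * θ)))) with hFdef
  have hF : ∀ θ : ℝ, HasDerivAt F ((D θ)⁻¹) θ := by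
    intro θ
    have hid : HasDerivAt (fun t : ℝ => (t : ℂ)) 1 θ := by
      simpa using (hasDerivAt_id θ).ofReal_comp
    have hE : HasDerivAt (fun t : ℝ => Complex.exp (Complex.I * t))
        (Complex.I * Complex.exp (Complex.I * θ)) θ := by
      simpa [mul_comm] using (hid.const_mul Complex.I).cexp
    have hE2 : HasDerivAt (fun t : ℝ => Complex.exp (-(Complex.I * t)))
        (-(Complex.I * Complex.exp (-(Complex.I * θ)))) θ := by
      simpa [mul_comm] using ((hid.const_mul Complex.I).neg).cexp
    have hL1 : HasDerivAt (fun t : ℝ => Complex.log (1 - ν * Complex.exp (Complex.I * t)))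
        ((-(ν * (Complex.I * Complex.exp (Complex.I * θ)))) / (1 - ν * Complex.exp (Complex.I * θ))) θ :=
      ((hE.const_mul ν).const_sub 1).clog_real (Or.inl (h1pos θ))
    have hL2 : HasDerivAt (fun t : ℝ => Complex.log (1 - μ * Complex.exp (-(Complex.I * t))))
        ((-(μ * -(Complex.I * Complex.exp (-(Complex.I * θ))))) / (1 - μ * Complex.exp (-(Complex.I * θ)))) θ :=
      ((hE2.const_mul μ).const_sub 1).clog_real (Or.inl (h2pos θ))
    have hder := ((hid.add (hL1.const_mul Complex.I)).sub (hL2.const_mul Complex.I)).const_mul (-w⁻¹)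
    have heq : -w⁻¹ * (1 + Complex.I * ((-(ν * (Complex.I * Complex.exp (Complex.I * θ)))) / (1 - ν * Complex.exp (Complex.I * θ)))
        - Complex.I * ((-(μ * -(Complex.I * Complex.exp (-(Complex.I * θ))))) / (1 - μ * Complex.exp (-(Complex.I * θ))))) = (D θ)⁻¹ := by
      apply eq_inv_of_mul_eq_one_left
      rw [hfact θ]
      exact alg_ident S w m n P ν μ (Complex.exp (Complex.I * θ)) (Complex.exp (-(Complex.I * θ)))
        hP hw0 hPdef hνdef hμdef hw2 (hEE θ) (h1ne θ) (h2ne θ)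
    exact heq ▸ hder
  have hcont : Continuous fun θ : ℝ => (D θ)⁻¹ := by
    apply Continuous.inv₀
    · rw [hDdef]; fun_prop
    · exact hDne
  have hint := intervalIntegral.integral_eq_sub_of_hasDerivAt
    (f := F) (f' := fun θ => (D θ)⁻¹) (a := (0:ℝ)) (b := 2 * Real.pi)
    (fun θ _ => hF θ) (hcont.intervalIntegrable _ _)
  rw [hDdef] at hint
  rw [hint]
  have he1 : Complex.exp (Complex.I * ((2 * Real.pi : ℝ) : ℂ)) = 1 := by
    rw [show Complex.I * ((2 * Real.pi : ℝ) : ℂ) = 2 * (Real.pi : ℂ) * Complex.I by push_cast; ring]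
    exact Complex.exp_two_pi_mul_I
  have he2 : Complex.exp (-(Complex.I * ((2 * Real.pi : ℝ) : ℂ))) = 1 := by
    rw [Complex.exp_neg, he1]; simp
  have hF2 : F (2 * Real.pi) = -w⁻¹ * (((2 * Real.pi : ℝ) : ℂ)
      + Complex.I * Complex.log (1 - ν) - Complex.I * Complex.log (1 - μ)) := by
    rw [hFdef]
    simp only [he1, he2, mul_one]
  have hF0 : F 0 = -w⁻¹ * (Complex.I * Complex.log (1 - ν) - Complex.I * Complex.log (1 - μ)) := by
    rw [hFdef]
    norm_num
  rw [hF2, hF0]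
  push_cast
  ring

theorem contour_integral_formula (ρ σ : ℝ) (h1 : 1 - σ ^ 2 > 0) (h2 : 1 - 2 * ρ ^ 2 + σ > 0)
    (ξ η lam kap δ : ℝ) (hξ : ξ = 1 - 2 * ρ ^ 2 + σ) (hη : η = (1 + σ) / (1 - σ))
    (hlam : lam = 1 / Real.sqrt (1 - σ)) (hkap : kap = 1 / Real.sqrt (1 - 2 * ρ ^ 2 + σ))
    (hδ : δ = 2 * ρ / ξ) :
    ∀ u v : ℝ,
      (∫ θ in (0 : ℝ)..(2 * Real.pi),
        ((2 * lam * ρ * Real.cos θ : ℂ) + Complex.I * lam * ξ * ((u : ℂ) + v) * Real.cos θ -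
          Complex.I * kap * ξ * ((u : ℂ) - v) * Real.sin θ - (Real.sqrt (2 * η) : ℂ))⁻¹) =
      -2 * Real.pi /
        (((lam : ℂ) ^ 2 * ξ ^ 2 * ((u : ℂ) + v - Complex.I * δ) ^ 2 +
          (kap : ℂ) ^ 2 * ξ ^ 2 * (-(u : ℂ) + v) ^ 2 + 2 * η) ^ ((1 : ℂ) / 2)) := by
  intro u v
  have hσlt : σ < 1 := by nlinarith
  have hσgt : (-1:ℝ) < σ := by nlinarith
  have h1σ : (0:ℝ) < 1 - σ := by linarith
  have hξpos : 0 < ξ := by rw [hξ]; exact h2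
  have hξne : ξ ≠ 0 := ne_of_gt hξpos
  have hηpos : 0 < η := by rw [hη]; exact div_pos (by linarith) h1σ
  obtain ⟨S, hSdef⟩ : ∃ S, S = Real.sqrt (2 * η) := ⟨_, rfl⟩
  have hSpos : 0 < S := hSdef ▸ Real.sqrt_pos.2 (by linarith)
  have hS2 : S ^ 2 = 2 * η := hSdef ▸ Real.sq_sqrt (by linarith)
  have hlam2 : lam ^ 2 * (1 - σ) = 1 := by
    rw [hlam, div_pow, one_pow, Real.sq_sqrt h1σ.le]; field_simp
  obtain ⟨a, hadef⟩ : ∃ a, a = 2 * lam * ρ := ⟨_, rfl⟩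
  obtain ⟨x, hxdef⟩ : ∃ x, x = kap * ξ * (u - v) := ⟨_, rfl⟩
  obtain ⟨y, hydef⟩ : ∃ y, y = lam * ξ * (u + v) := ⟨_, rfl⟩
  have ha2' : a ^ 2 * (1 - σ) = 4 * ρ ^ 2 := by
    rw [hadef]; linear_combination 4 * ρ ^ 2 * hlam2
  have hS2' : S ^ 2 * (1 - σ) = 2 * (1 + σ) := by
    rw [hS2, hη]; field_simp
  have ha2 : a ^ 2 < S ^ 2 := by nlinarith
  obtain ⟨m, hmdef⟩ : ∃ m : ℂ, m = ((a:ℂ) + (x:ℂ)) + (y:ℂ) * Complex.I := ⟨_, rfl⟩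
  obtain ⟨n, hndef⟩ : ∃ n : ℂ, n = ((a:ℂ) - (x:ℂ)) + (y:ℂ) * Complex.I := ⟨_, rfl⟩
  obtain ⟨R, hRdef⟩ : ∃ R : ℂ, R = ((S ^ 2 : ℝ) : ℂ) - m * n := ⟨_, rfl⟩
  have hRre : R.re = S ^ 2 - a ^ 2 + x ^ 2 + y ^ 2 := by
    rw [hRdef, hmdef, hndef]
    simp [Complex.mul_re, Complex.mul_im, ← Complex.ofReal_pow]
    ring
  have hRpos : 0 < R.re := by rw [hRre]; nlinarith [sq_nonneg x, sq_nonneg y]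
  have hR0 : R ≠ 0 := by intro h0; rw [h0] at hRpos; simp at hRpos
  obtain ⟨w, hwdef⟩ : ∃ w : ℂ, w = R ^ ((1:ℂ)/2) := ⟨_, rfl⟩
  have hww : w * w = R := by rw [hwdef]; exact cpow_half_mul_self hR0
  have hwre : 0 < w.re := by rw [hwdef]; exact cpow_half_re_pos hRpos
  have hw0 : w ≠ 0 := by intro h0; rw [h0] at hwre; simp at hwre
  have hP : (S:ℂ) + w ≠ 0 := by
    intro h0
    have : ((S:ℂ) + w).re = 0 := by rw [h0]; simp
    rw [Complex.add_re, Complex.ofReal_re] at this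
    linarith
  have hce : w.re ^ 2 - w.im ^ 2 = R.re := by
    have hre := congrArg Complex.re hww
    rw [Complex.mul_re] at hre
    nlinarith [hre]
  have hcx : x ^ 2 < w.re ^ 2 := by nlinarith [sq_nonneg w.im, sq_nonneg y]
  have habs : ∀ z : ℂ, Complex.normSq z < Complex.normSq ((S:ℂ) + w) →
      ‖z‖ < ‖(S:ℂ) + w‖ := by
    intro z hz
    rw [Complex.norm_def, Complex.norm_def]
    exact Real.sqrt_lt_sqrt (Complex.normSq_nonneg _) hz
  have hnormP : Complex.normSq ((S:ℂ) + w) = (S + w.re) ^ 2 + w.im ^ 2 := by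
    simp [Complex.normSq_apply]; ring
  have hm_lt : ‖m‖ < ‖(S:ℂ) + w‖ := by
    apply habs
    rw [hnormP, hmdef]
    have hnm : Complex.normSq (((a:ℂ) + (x:ℂ)) + (y:ℂ) * Complex.I) = (a + x) ^ 2 + y ^ 2 := by
      simp [Complex.normSq_apply]; ring
    rw [hnm]
    nlinarith [mul_pos (sub_pos.2 ha2) (sub_pos.2 hcx), mul_pos hSpos hwre, sq_nonneg w.im,
      sq_nonneg (S * w.re - a * x), sq_nonneg (S * w.re + a * x)]
  have hn_lt : ‖n‖ < ‖(S:ℂ) + w‖ := by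
    apply habs
    rw [hnormP, hndef]
    have hnn : Complex.normSq (((a:ℂ) - (x:ℂ)) + (y:ℂ) * Complex.I) = (a - x) ^ 2 + y ^ 2 := by
      simp [Complex.normSq_apply]; ring
    rw [hnn]
    nlinarith [mul_pos (sub_pos.2 ha2) (sub_pos.2 hcx), mul_pos hSpos hwre, sq_nonneg w.im,
      sq_nonneg (S * w.re - a * x), sq_nonneg (S * w.re + a * x)]
  have hww' : w * w = ((S:ℂ)) ^ 2 - m * n := by rw [hww, hRdef]; push_cast; ring
  have hint := aux_integral ((S:ℂ)) m n w hww' hw0 hP hm_lt hn_lt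
  have ca : ((a:ℝ):ℂ) = 2 * (lam:ℂ) * (ρ:ℂ) := by rw [hadef]; push_cast; ring
  have cx : ((x:ℝ):ℂ) = (kap:ℂ) * (ξ:ℂ) * ((u:ℂ) - (v:ℂ)) := by rw [hxdef]; push_cast; ring
  have cy : ((y:ℝ):ℂ) = (lam:ℂ) * (ξ:ℂ) * ((u:ℂ) + (v:ℂ)) := by rw [hydef]; push_cast; ring
  have hI : Complex.I * Complex.I = -1 := Complex.I_mul_I
  have hpt : ∀ θ : ℝ,
      ((2 * lam * ρ * Real.cos θ : ℂ) + Complex.I * lam * ξ * ((u : ℂ) + v) * Real.cos θ -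
        Complex.I * kap * ξ * ((u : ℂ) - v) * Real.sin θ - (Real.sqrt (2 * η) : ℂ))⁻¹
      = (n / 2 * Complex.exp (Complex.I * θ) + m / 2 * Complex.exp (-(Complex.I * θ)) - ((S:ℝ):ℂ))⁻¹ := by
    intro θ
    congr 1
    rw [hmdef, hndef, ← hSdef]
    push_cast
    simp only [Complex.cos, Complex.sin]
    rw [show Complex.I * (θ:ℂ) = (θ:ℂ) * Complex.I from mul_comm _ _,
      show -((θ:ℂ) * Complex.I) = -(θ:ℂ) * Complex.I by ring]
    linear_combination
      (Complex.I * (Complex.exp ((θ:ℂ) * Complex.I) + Complex.exp (-(θ:ℂ) * Complex.I)) / 2) * cy.symm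
      - (Complex.I * (Complex.exp (-(θ:ℂ) * Complex.I) - Complex.exp ((θ:ℂ) * Complex.I)) * Complex.I / 2) * cx.symm
      + (-(((x:ℝ):ℂ) * (Complex.exp (-(θ:ℂ) * Complex.I) - Complex.exp ((θ:ℂ) * Complex.I)) / 2)) * hI
      + (-(Complex.exp ((θ:ℂ) * Complex.I) + Complex.exp (-(θ:ℂ) * Complex.I)) / 2) * ca
  simp only [hpt]
  rw [hint]
  have cδ : (lam:ℂ) * (ξ:ℂ) * (δ:ℂ) = ((a:ℝ):ℂ) := by
    have hr : lam * ξ * δ = a := by rw [hδ, hadef]; field_simp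
    calc (lam:ℂ) * (ξ:ℂ) * (δ:ℂ) = ((lam * ξ * δ : ℝ) : ℂ) := by push_cast; ring
    _ = ((a:ℝ):ℂ) := by rw [hr]
  have cS : 2 * ((η:ℝ):ℂ) = ((S:ℝ):ℂ) ^ 2 := by
    have h := congrArg (fun t : ℝ => (t : ℂ)) hS2
    push_cast at h
    exact h.symm
  have c3' : (kap:ℂ) * (ξ:ℂ) * (-(u:ℂ) + (v:ℂ)) = -((x:ℝ):ℂ) := by
    rw [hxdef]; push_cast; ring
  have hbase : (lam : ℂ) ^ 2 * (ξ:ℂ) ^ 2 * ((u : ℂ) + v - Complex.I * δ) ^ 2 +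
      (kap : ℂ) ^ 2 * (ξ:ℂ) ^ 2 * (-(u : ℂ) + v) ^ 2 + 2 * (η:ℂ) = R := by
    rw [hRdef, hmdef, hndef]
    push_cast
    linear_combination
      ((lam:ℂ)*ξ*((u:ℂ)+v) - Complex.I*((lam:ℂ)*ξ*δ) + (y:ℂ) - Complex.I*(a:ℂ)) * cy.symm
      + (-(Complex.I)*((lam:ℂ)*ξ*((u:ℂ)+v) - Complex.I*((lam:ℂ)*ξ*δ) + (y:ℂ) - Complex.I*(a:ℂ))) * cδ
      + ((kap:ℂ)*ξ*(-(u:ℂ)+v) - ((x:ℝ):ℂ)) * c3'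
      + cS
      + (((y:ℝ):ℂ)^2 + ((a:ℝ):ℂ)^2) * hI
  rw [hbase, ← hwdef]
  ring
end

section
/- Let γ > 0, λ > 0, α > 0, δ ∈ ℝ with α > λ|δ|, and c ∈ ℝ. Then ∫_ℝ exp(−γ·√(λ²(s−iδ)² + α²))·(λ²(s−iδ)² + α²)^{−1/2}·exp(−ics) ds = (2/λ)·exp(cδ)·K₀((α/λ)·√(γ²λ² + c²)), where the complex square root is the principal branch and K₀(z) = ∫₀^∞ exp(−z cosh t) dt. -/
open MeasureTheory

/-- The modified Bessel function of the second kind `K₀(z)` for complex argument with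
positive real part, defined by `K₀(z) = ∫₀^∞ exp(-z cosh t) dt`. -/
noncomputable def besselK0 (z : ℂ) : ℂ :=
  ∫ t in Set.Ioi (0 : ℝ), Complex.exp (-z * Real.cosh t)

open Complex Filter Set

set_option maxHeartbeats 1000000

lemma contour_shift {f : ℂ → ℂ} {y₁ y₂ : ℝ}
    (hd : ∀ z : ℂ, z.im ∈ Set.uIcc y₁ y₂ → DifferentiableAt ℂ f z)
    {B : ℝ → ℝ}
    (hB : ∀ x : ℝ, ∀ y ∈ Set.uIcc y₁ y₂, ‖f (x + y * I)‖ ≤ B |x|)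
    (hB0 : Tendsto B atTop (nhds 0))
    (hi1 : Integrable fun x : ℝ => f (x + y₁ * I))
    (hi2 : Integrable fun x : ℝ => f (x + y₂ * I)) :
    ∫ x : ℝ, f (x + y₁ * I) = ∫ x : ℝ, f (x + y₂ * I) := by
  have rect : ∀ T : ℝ,
      (∫ x : ℝ in -T..T, f (x + y₁ * I)) - (∫ x : ℝ in -T..T, f (x + y₂ * I)) +
        I • (∫ y : ℝ in y₁..y₂, f (T + y * I)) -
        I • (∫ y : ℝ in y₁..y₂, f (-T + y * I)) = 0 := by
    intro T
    have := Complex.integral_boundary_rect_eq_zero_of_differentiableOn f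
      (⟨-T, y₁⟩ : ℂ) (⟨T, y₂⟩ : ℂ) ?_
    · simpa using this
    · intro z hz
      rw [Complex.mem_reProdIm] at hz
      exact (hd z hz.2).differentiableWithinAt
  -- limits
  have h1 : Tendsto (fun T : ℝ => ∫ x : ℝ in -T..T, f (x + y₁ * I)) atTop
      (nhds (∫ x : ℝ, f (x + y₁ * I))) :=
    intervalIntegral_tendsto_integral hi1 tendsto_neg_atTop_atBot tendsto_id
  have h2 : Tendsto (fun T : ℝ => ∫ x : ℝ in -T..T, f (x + y₂ * I)) atTop
      (nhds (∫ x : ℝ, f (x + y₂ * I))) :=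
    intervalIntegral_tendsto_integral hi2 tendsto_neg_atTop_atBot tendsto_id
  have hvert : ∀ s : ℝ → ℝ, (∀ T, |s T| = |T|) →
      Tendsto (fun T : ℝ => I • (∫ y : ℝ in y₁..y₂, f (s T + y * I))) atTop (nhds 0) := by
    intro s hs
    rw [tendsto_zero_iff_norm_tendsto_zero]
    have hbnd : ∀ T : ℝ, ‖I • (∫ y : ℝ in y₁..y₂, f (s T + y * I))‖ ≤ B |T| * |y₂ - y₁| := by
      intro T
      rw [norm_smul, Complex.norm_I, one_mul]
      refine intervalIntegral.norm_integral_le_of_norm_le_const ?_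
      intro y hy
      have := hB (s T) y (Set.uIoc_subset_uIcc hy)
      rwa [hs T] at this
    have hlim : Tendsto (fun T : ℝ => B |T| * |y₂ - y₁|) atTop (nhds 0) := by
      have : Tendsto (fun T : ℝ => B |T|) atTop (nhds 0) := by
        refine hB0.comp ?_
        exact tendsto_abs_atTop_atTop
      simpa using this.mul_const |y₂ - y₁|
    refine squeeze_zero (fun T => norm_nonneg _) hbnd hlim
  have hv1 := hvert (fun T => T) (fun T => rfl)
  have hv2 := hvert (fun T => -T) (fun T => abs_neg T)
  simp only [Complex.ofReal_neg] at hv2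
  have key : Tendsto (fun T : ℝ =>
      (∫ x : ℝ in -T..T, f (x + y₁ * I)) - (∫ x : ℝ in -T..T, f (x + y₂ * I)) +
        I • (∫ y : ℝ in y₁..y₂, f (T + y * I)) -
        I • (∫ y : ℝ in y₁..y₂, f (-T + y * I))) atTop
      (nhds ((∫ x : ℝ, f (x + y₁ * I)) - (∫ x : ℝ, f (x + y₂ * I)) + 0 - 0)) :=
    ((h1.sub h2).add hv1).sub hv2
  have : (∫ x : ℝ, f (x + y₁ * I)) - (∫ x : ℝ, f (x + y₂ * I)) + 0 - 0 = 0 := by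
    apply tendsto_nhds_unique key
    simp only [rect]
    exact tendsto_const_nhds
  rw [add_zero, sub_zero] at this
  exact sub_eq_zero.mp this

lemma re_cpow_half_nonneg (z : ℂ) : Real.sqrt (‖z‖) * Real.cos (Complex.arg z / 2) ≥ 0 := by
  apply mul_nonneg (Real.sqrt_nonneg _)
  apply Real.cos_nonneg_of_mem_Icc
  constructor
  · linarith [Complex.neg_pi_lt_arg z, Real.pi_pos]
  · linarith [Complex.arg_le_pi z]

lemma cpow_half_re (z : ℂ) (hz0 : z ≠ 0) :
    (z ^ ((1:ℂ)/2)).re = Real.sqrt (‖z‖) * Real.cos (Complex.arg z / 2) := by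
  have habs : (0:ℝ) < ‖z‖ := by
    simpa [norm_pos_iff] using hz0
  rw [Complex.cpow_def_of_ne_zero hz0, Complex.exp_re]
  have hre : (Complex.log z * ((1:ℂ)/2)).re = Real.log (‖z‖) / 2 := by
    simp [Complex.mul_re, Complex.log_re, Complex.log_im]
    ring
  have him : (Complex.log z * ((1:ℂ)/2)).im = Complex.arg z / 2 := by
    simp [Complex.mul_im, Complex.log_re, Complex.log_im]
    ring
  rw [hre, him]
  congr 1
  rw [Real.sqrt_eq_rpow, Real.rpow_def_of_pos habs]
  ring_nf

lemma re_sqrt_le_re_cpow_half {z : ℂ} (hz : 0 < z.re) :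
    Real.sqrt z.re ≤ (z ^ ((1:ℂ)/2)).re := by
  have hz0 : z ≠ 0 := fun h => by simp [h] at hz
  rw [cpow_half_re z hz0]
  set R := Real.sqrt (‖z‖) * Real.cos (Complex.arg z / 2) with hR
  have hRnn : 0 ≤ R := re_cpow_half_nonneg z
  have hsq : R ^ 2 = (‖z‖ + z.re) / 2 := by
    rw [hR, mul_pow, Real.sq_sqrt (norm_nonneg z), Real.cos_sq,
      show 2 * (Complex.arg z / 2) = Complex.arg z by ring, Complex.cos_arg hz0]
    have : ‖z‖ ≠ 0 := norm_ne_zero_iff.mpr hz0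
    field_simp
  have h1 : z.re ≤ R ^ 2 := by
    rw [hsq]; linarith [Complex.re_le_norm z]
  calc Real.sqrt z.re ≤ Real.sqrt (R ^ 2) := Real.sqrt_le_sqrt h1
    _ = R := by rw [Real.sqrt_sq hRnn]

lemma abs_cpow_neg_half (z : ℂ) (hz0 : z ≠ 0) :
    ‖z ^ (-(1:ℂ)/2)‖ = ‖z‖ ^ (-(1/2) : ℝ) := by
  rw [Complex.norm_cpow_of_ne_zero hz0]
  norm_num

lemma ofReal_cpow_half {t : ℝ} (ht : 0 ≤ t) :
    ((t : ℂ)) ^ ((1:ℂ)/2) = ((Real.sqrt t : ℝ) : ℂ) := by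
  rw [Real.sqrt_eq_rpow, Complex.ofReal_cpow ht]
  norm_num

lemma ofReal_cpow_neg_half {t : ℝ} (ht : 0 ≤ t) :
    ((t : ℂ)) ^ (-(1:ℂ)/2) = ((Real.sqrt t : ℝ) : ℂ)⁻¹ := by
  rw [Real.sqrt_eq_rpow, Complex.ofReal_cpow ht, ← Complex.cpow_neg]
  norm_num

lemma abs_le_cosh (x : ℝ) : |x| ≤ Real.cosh x := by
  rw [Real.cosh_eq]
  have e2 : Real.exp |x| = Real.exp (|x|/2) * Real.exp (|x|/2) := by
    rw [← Real.exp_add]; ring_nf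
  have h1 : 2 * |x| ≤ Real.exp |x| := by
    nlinarith [Real.add_one_le_exp (|x|/2), abs_nonneg x, Real.exp_pos (|x|/2),
      sq_nonneg (1 - |x|/2)]
  have h2 : Real.exp |x| ≤ Real.exp x + Real.exp (-x) := by
    rcases abs_cases x with ⟨h, _⟩ | ⟨h, _⟩
    · rw [h]; exact le_add_of_nonneg_right (Real.exp_pos _).le
    · rw [h]; exact le_add_of_nonneg_left (Real.exp_pos _).le
  linarith

lemma integrable_exp_neg_mul_abs {k : ℝ} (hk : 0 < k) :
    Integrable (fun x : ℝ => Real.exp (-k * |x|)) := by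
  have hIoi : IntegrableOn (fun x : ℝ => Real.exp (-k * |x|)) (Ioi 0) := by
    refine (exp_neg_integrableOn_Ioi 0 hk).congr_fun ?_ measurableSet_Ioi
    intro x hx
    simp [abs_of_pos (show (0:ℝ) < x from hx)]
  have hIic : IntegrableOn (fun x : ℝ => Real.exp (-k * |x|)) (Iic 0) := by
    rw [← Measure.map_neg_eq_self (volume : Measure ℝ)]
    have m : MeasurableEmbedding fun x : ℝ => -x := (Homeomorph.neg ℝ).measurableEmbedding
    rw [m.integrableOn_map_iff]
    simp_rw [Function.comp_def, abs_neg, neg_preimage, neg_Iic, neg_zero]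
    exact (integrableOn_Ici_iff_integrableOn_Ioi).mpr hIoi
  rw [← integrableOn_univ, ← Iic_union_Ioi (a := (0:ℝ))]
  exact hIic.union hIoi

lemma integrable_of_exp_decay {f : ℝ → ℂ} (hf : Continuous f) {C k : ℝ} (hk : 0 < k)
    (h : ∀ x, ‖f x‖ ≤ C * Real.exp (-k * |x|)) : Integrable f :=
  (((integrable_exp_neg_mul_abs hk).const_mul C).mono' hf.aestronglyMeasurable
    (Filter.Eventually.of_forall h))

lemma norm_cexp_neg_mul_cosh (r : ℝ) (x y : ℝ) :
    ‖Complex.exp (-(r:ℂ) * Complex.cosh (x + y * I))‖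
      = Real.exp (-(r * (Real.cosh x * Real.cos y))) := by
  rw [Complex.norm_exp]
  congr 1
  have : Complex.cosh ((x:ℂ) + (y:ℂ) * I)
      = (Real.cosh x : ℂ) * (Real.cos y : ℂ) + (Real.sinh x : ℂ) * ((Real.sin y : ℂ) * I) := by
    rw [Complex.cosh_add, Complex.cosh_mul_I, Complex.sinh_mul_I,
      Complex.ofReal_cosh, Complex.ofReal_sinh, Complex.ofReal_cos, Complex.ofReal_sin]
  rw [this]
  simp only [Complex.mul_re, Complex.add_re, Complex.mul_im, Complex.add_im, Complex.I_re,
    Complex.I_im, Complex.ofReal_re, Complex.ofReal_im, Complex.neg_re, Complex.neg_im]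
  ring

lemma integral_exp_neg_cosh_sub_I_sinh (a b : ℝ) (ha : 0 < a) :
    (∫ t : ℝ, Complex.exp (-(a:ℂ) * Complex.cosh t - I * b * Complex.sinh t))
      = 2 * besselK0 (Real.sqrt (a ^ 2 + b ^ 2)) := by
  set r : ℝ := Real.sqrt (a ^ 2 + b ^ 2) with hrdef
  have hr : 0 < r := Real.sqrt_pos.mpr (by positivity)
  set θ : ℝ := Real.arctan (b / a) with hθdef
  have hθ2 : |θ| < Real.pi / 2 := by
    rw [abs_lt]
    exact ⟨Real.neg_pi_div_two_lt_arctan _, Real.arctan_lt_pi_div_two _⟩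
  have ha' : a ≠ 0 := ha.ne'
  have hr' : r ≠ 0 := hr.ne'
  have hr2 : r ^ 2 = a ^ 2 + b ^ 2 := Real.sq_sqrt (by positivity)
  have hsq : Real.sqrt (1 + (b/a)^2) = r / a := by
    rw [show 1 + (b/a)^2 = (r/a)^2 by field_simp; linear_combination -hr2]
    exact Real.sqrt_sq (by positivity)
  have hcosθ : Real.cos θ = a / r := by
    rw [hθdef, Real.cos_arctan, hsq, one_div_div]
  have hsinθ : Real.sin θ = b / r := by
    rw [hθdef, Real.sin_arctan, hsq]
    field_simp
  have hcosθpos : 0 < Real.cos θ := by rw [hcosθ]; positivity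
  have hrcos : r * Real.cos θ = a := by rw [hcosθ]; field_simp
  have hrsin : r * Real.sin θ = b := by rw [hsinθ]; field_simp
  set H : ℂ → ℂ := fun w => Complex.exp (-(r:ℂ) * Complex.cosh w) with hHdef
  -- pointwise identity on the line Im = θ
  have hline : ∀ t : ℝ, H ((t:ℂ) + (θ:ℂ) * I)
      = Complex.exp (-(a:ℂ) * Complex.cosh t - I * b * Complex.sinh t) := by
    intro t
    simp only [hHdef]
    refine congrArg Complex.exp ?_
    rw [Complex.cosh_add, Complex.cosh_mul_I, Complex.sinh_mul_I]
    have h1 : ((r:ℂ)) * (Complex.cos θ) = (a:ℂ) := by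
      rw [← Complex.ofReal_cos, ← Complex.ofReal_mul, hrcos]
    have h2 : ((r:ℂ)) * (Complex.sin θ) = (b:ℂ) := by
      rw [← Complex.ofReal_sin, ← Complex.ofReal_mul, hrsin]
    calc -(r:ℂ) * (Complex.cosh t * Complex.cos θ + Complex.sinh t * (Complex.sin θ * I))
        = -(((r:ℂ) * Complex.cos θ) * Complex.cosh t)
          - I * ((r:ℂ) * Complex.sin θ) * Complex.sinh t := by ring
      _ = -(a:ℂ) * Complex.cosh t - I * b * Complex.sinh t := by rw [h1, h2]; ring
  -- bounds on the strip
  have hcosy : ∀ y ∈ Set.uIcc θ 0, Real.cos θ ≤ Real.cos y := by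
    intro y hy
    have h1 : |y| ≤ |θ| := by
      rcases Set.mem_uIcc.mp hy with ⟨h1, h2⟩ | ⟨h1, h2⟩ <;> rw [abs_le] <;>
        constructor <;> cases abs_cases θ <;> linarith [neg_abs_le θ, le_abs_self θ]
    calc Real.cos θ = Real.cos |θ| := (Real.cos_abs θ).symm
      _ ≤ Real.cos |y| := Real.cos_le_cos_of_nonneg_of_le_pi (abs_nonneg y)
          (by linarith [Real.pi_pos]) h1
      _ = Real.cos y := Real.cos_abs y
  have hnorm : ∀ x : ℝ, ∀ y ∈ Set.uIcc θ 0,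
      ‖H ((x:ℂ) + (y:ℂ) * I)‖ ≤ Real.exp (-(r * Real.cos θ) * |x|) := by
    intro x y hy
    simp only [hHdef]
    rw [norm_cexp_neg_mul_cosh]
    apply Real.exp_le_exp.mpr
    have h1 : Real.cos θ ≤ Real.cos y := hcosy y hy
    have h2 : |x| ≤ Real.cosh x := abs_le_cosh x
    have h3 : (0:ℝ) < Real.cosh x := Real.cosh_pos x
    have s1 : (r * Real.cos θ) * |x| ≤ (r * Real.cos θ) * Real.cosh x :=
      mul_le_mul_of_nonneg_left h2 (by positivity)
    have s2 : (r * Real.cosh x) * Real.cos θ ≤ (r * Real.cosh x) * Real.cos y :=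
      mul_le_mul_of_nonneg_left h1 (by positivity)
    nlinarith [s1, s2]
  have hk : 0 < r * Real.cos θ := mul_pos hr hcosθpos
  -- integrability on the two lines
  have hcont : Continuous H := by
    simp only [hHdef]
    exact Complex.continuous_exp.comp (continuous_const.mul Complex.continuous_cosh)
  have hint : ∀ y₀ : ℝ, y₀ ∈ Set.uIcc θ 0 →
      Integrable (fun x : ℝ => H ((x:ℂ) + (y₀:ℂ) * I)) := by
    intro y₀ hy₀
    refine integrable_of_exp_decay ?_ hk (C := 1) ?_
    · exact hcont.comp (by continuity)
    · intro x
      rw [one_mul]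
      exact hnorm x y₀ hy₀
  -- contour shift
  have hshift : (∫ x : ℝ, H ((x:ℂ) + (θ:ℂ) * I)) = ∫ x : ℝ, H ((x:ℂ) + ((0:ℝ):ℂ) * I) := by
    refine contour_shift (B := fun t => Real.exp (-(r * Real.cos θ) * t)) (fun z _ => ?_)
      hnorm ?_ (hint θ Set.left_mem_uIcc) (hint 0 Set.right_mem_uIcc)
    · exact ((Complex.differentiable_cosh.const_mul (-(r:ℂ))).cexp).differentiableAt
    · have h1 : Tendsto (fun t : ℝ => (r * Real.cos θ) * t) atTop atTop :=
        Tendsto.const_mul_atTop hk tendsto_id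
      have h2 : Tendsto (fun t : ℝ => -((r * Real.cos θ) * t)) atTop atBot :=
        tendsto_neg_atBot_iff.mpr h1
      have h3 := Real.tendsto_exp_atBot.comp h2
      have h4 : (fun t : ℝ => Real.exp (-(r * Real.cos θ) * t))
          = (Real.exp ∘ fun t : ℝ => -((r * Real.cos θ) * t)) := by
        funext t; simp [Function.comp, neg_mul]
      rw [h4]; exact h3
  -- evaluate the integral on the real axis
  have hzero : (∫ x : ℝ, H ((x:ℂ) + ((0:ℝ):ℂ) * I)) = 2 * besselK0 r := by
    set g : ℝ → ℂ := fun x => Complex.exp (-(r:ℂ) * Real.cosh x) with hgdef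
    have hsimp : ∀ x : ℝ, H ((x:ℂ) + ((0:ℝ):ℂ) * I) = g x := by
      intro x
      simp only [hHdef, hgdef]
      simp only [Complex.ofReal_zero, zero_mul, add_zero, Complex.ofReal_cosh]
    have hg : Integrable g := by
      have := hint 0 Set.right_mem_uIcc
      refine this.congr ?_
      exact Filter.Eventually.of_forall fun x => (hsimp x)
    have hneg : (∫ x in Iic (0:ℝ), g x) = ∫ x in Ioi (0:ℝ), g x := by
      have h1 : (∫ x in Iic (0:ℝ), g (-x)) = ∫ x in Ioi (-(0:ℝ)), g x :=
        integral_comp_neg_Iic 0 g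
      rw [neg_zero] at h1
      rw [← h1]
      apply setIntegral_congr_fun measurableSet_Iic
      intro x _
      simp only [hgdef, Real.cosh_neg]
    have hsplit : (∫ x in Iic (0:ℝ), g x) + (∫ x in Ioi (0:ℝ), g x) = ∫ x : ℝ, g x :=
      intervalIntegral.integral_Iic_add_Ioi hg.integrableOn hg.integrableOn
    have hbk : besselK0 (r:ℂ) = ∫ x in Ioi (0:ℝ), g x := by
      unfold besselK0
      simp only [hgdef]
    calc (∫ x : ℝ, H ((x:ℂ) + ((0:ℝ):ℂ) * I)) = ∫ x : ℝ, g x := by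
          congr 1; funext x; exact hsimp x
      _ = (∫ x in Iic (0:ℝ), g x) + (∫ x in Ioi (0:ℝ), g x) := hsplit.symm
      _ = 2 * besselK0 (r:ℂ) := by rw [hneg, hbk]; ring
  calc (∫ t : ℝ, Complex.exp (-(a:ℂ) * Complex.cosh t - I * b * Complex.sinh t))
      = ∫ x : ℝ, H ((x:ℂ) + (θ:ℂ) * I) := by
        congr 1; funext t; rw [hline t]
    _ = ∫ x : ℝ, H ((x:ℂ) + ((0:ℝ):ℂ) * I) := hshift
    _ = 2 * besselK0 r := hzero

lemma abs_le_abs_of_mem_uIcc_zero {a y : ℝ} (hy : y ∈ Set.uIcc a 0) : |y| ≤ |a| := by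
  rcases Set.mem_uIcc.mp hy with ⟨h1, h2⟩ | ⟨h1, h2⟩ <;> rw [abs_le] <;>
    constructor <;> cases abs_cases a <;> linarith [neg_abs_le a, le_abs_self a]

theorem outer_fourier_integral_n_two (γ lam α δ : ℝ) (hγ : 0 < γ) (hlam : 0 < lam)
    (hα : 0 < α) (hαδ : lam * |δ| < α) (c : ℝ) :
    (∫ s : ℝ,
        Complex.exp (-(γ : ℂ) *
          (((lam : ℂ) ^ 2 * ((s : ℂ) - Complex.I * δ) ^ 2 + (α : ℂ) ^ 2) ^ ((1 : ℂ) / 2))) *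
        (((lam : ℂ) ^ 2 * ((s : ℂ) - Complex.I * δ) ^ 2 + (α : ℂ) ^ 2) ^ (-(1 : ℂ) / 2)) *
        Complex.exp (-Complex.I * c * s)) =
    (2 / (lam : ℂ)) * (Real.exp (c * δ) : ℂ) *
      besselK0 (((α / lam) * Real.sqrt (γ ^ 2 * lam ^ 2 + c ^ 2) : ℝ) : ℂ) := by
  set h : ℂ → ℂ := fun w => (lam:ℂ)^2 * w^2 + (α:ℂ)^2 with hhdef
  set F : ℂ → ℂ := fun w =>
    Complex.exp (-(γ:ℂ) * (h w ^ ((1:ℂ)/2))) * (h w ^ (-(1:ℂ)/2)) * Complex.exp (-I * c * w)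
    with hFdef
  have hδα : lam ^ 2 * δ ^ 2 < α ^ 2 := by
    have h1 : 0 < (α - lam * |δ|) * (α + lam * |δ|) :=
      mul_pos (by linarith) (by positivity)
    nlinarith [h1, _root_.sq_abs δ]
  set m : ℝ := α ^ 2 - lam ^ 2 * δ ^ 2 with hmdef
  have hm : 0 < m := by rw [hmdef]; linarith
  -- real part of h on the strip
  have hre : ∀ x y : ℝ, (h ((x:ℂ) + (y:ℂ) * I)).re = lam^2 * (x^2 - y^2) + α^2 := by
    intro x y
    simp only [hhdef, Complex.add_re, Complex.mul_re, Complex.mul_im, Complex.add_im,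
      Complex.I_re, Complex.I_im, Complex.ofReal_re, Complex.ofReal_im, pow_two]
    ring
  have hre_lb : ∀ x y : ℝ, |y| ≤ |δ| → lam^2 * x^2 + m ≤ (h ((x:ℂ) + (y:ℂ) * I)).re := by
    intro x y hy
    rw [hre x y, hmdef]
    have : y^2 ≤ δ^2 := by
      rw [← _root_.sq_abs y, ← _root_.sq_abs δ]
      exact pow_le_pow_left₀ (abs_nonneg y) hy 2
    nlinarith [sq_nonneg lam]
  have hre_pos : ∀ z : ℂ, |z.im| ≤ |δ| → 0 < (h z).re := by
    intro z hz
    have := hre_lb z.re z.im hz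
    rw [Complex.re_add_im z] at this
    nlinarith [sq_nonneg (lam * z.re)]
  -- norm bound for F on the strip
  set C : ℝ := Real.exp (|c| * |δ|) * m ^ (-(1/2) : ℝ) with hCdef
  have hnormF : ∀ x y : ℝ, |y| ≤ |δ| →
      ‖F ((x:ℂ) + (y:ℂ) * I)‖ ≤ C * Real.exp (-(γ * lam) * |x|) := by
    intro x y hy
    set z : ℂ := (x:ℂ) + (y:ℂ) * I with hzdef
    have hzre : 0 < (h z).re := by
      apply hre_pos
      rw [hzdef]
      simp only [Complex.add_im, Complex.ofReal_im, Complex.mul_im, Complex.I_im, Complex.I_re,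
        Complex.ofReal_re, zero_add, mul_zero, mul_one, zero_mul, add_zero]
      exact hy
    have hz0 : h z ≠ 0 := fun hq => by rw [hq] at hzre; simp at hzre
    rw [hFdef]
    simp only
    rw [norm_mul, norm_mul]
    have e1 : ‖Complex.exp (-(γ:ℂ) * (h z ^ ((1:ℂ)/2)))‖ ≤ Real.exp (-(γ * lam) * |x|) := by
      rw [Complex.norm_exp]
      apply Real.exp_le_exp.mpr
      have hrew : (-(γ:ℂ) * (h z ^ ((1:ℂ)/2))).re = -(γ * ((h z ^ ((1:ℂ)/2))).re) := by
        simp [Complex.mul_re, Complex.ofReal_re, Complex.ofReal_im]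
      rw [hrew]
      have h1 : Real.sqrt (h z).re ≤ ((h z) ^ ((1:ℂ)/2)).re := re_sqrt_le_re_cpow_half hzre
      have h2 : lam * |x| ≤ Real.sqrt (h z).re := by
        have h3 : (lam * |x|)^2 ≤ (h z).re := by
          have := hre_lb x y hy
          rw [← hzdef] at this
          nlinarith [hm, _root_.sq_abs x]
        calc lam * |x| = Real.sqrt ((lam * |x|)^2) :=
              (Real.sqrt_sq (by positivity)).symm
          _ ≤ Real.sqrt (h z).re := Real.sqrt_le_sqrt h3
      nlinarith [hγ]
    have e2 : ‖(h z) ^ (-(1:ℂ)/2)‖ ≤ m ^ (-(1/2) : ℝ) := by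
      rw [abs_cpow_neg_half _ hz0]
      apply Real.rpow_le_rpow_of_nonpos hm ?_ (by norm_num)
      calc m ≤ lam^2 * x^2 + m := by nlinarith [sq_nonneg (lam*x)]
        _ ≤ (h z).re := by have := hre_lb x y hy; rwa [← hzdef] at this
        _ ≤ ‖h z‖ := Complex.re_le_norm _
    have e3 : ‖Complex.exp (-I * c * z)‖ ≤ Real.exp (|c| * |δ|) := by
      rw [Complex.norm_exp]
      apply Real.exp_le_exp.mpr
      have : (-I * (c:ℂ) * z).re = c * y := by
        rw [hzdef]
        simp [Complex.mul_re, Complex.mul_im]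
      rw [this]
      calc c * y ≤ |c * y| := le_abs_self _
        _ = |c| * |y| := abs_mul c y
        _ ≤ |c| * |δ| := mul_le_mul_of_nonneg_left hy (abs_nonneg c)
    calc ‖Complex.exp (-(γ:ℂ) * (h z ^ ((1:ℂ)/2)))‖ * ‖(h z) ^ (-(1:ℂ)/2)‖ *
          ‖Complex.exp (-I * c * z)‖
        ≤ Real.exp (-(γ * lam) * |x|) * (m ^ (-(1/2) : ℝ)) * Real.exp (|c| * |δ|) := by
          gcongr <;> positivity
      _ = C * Real.exp (-(γ * lam) * |x|) := by rw [hCdef]; ring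
  -- differentiability on the strip
  have hdiff : ∀ z : ℂ, |z.im| ≤ |δ| → DifferentiableAt ℂ F z := by
    intro z hz
    have hslit : h z ∈ Complex.slitPlane := Or.inl (hre_pos z hz)
    have hh : DifferentiableAt ℂ h z := by
      rw [hhdef]
      exact ((differentiableAt_pow 2).const_mul _).add_const _
    have d1 : DifferentiableAt ℂ (fun w => Complex.exp (-(γ:ℂ) * (h w ^ ((1:ℂ)/2)))) z := by
      exact (((hh.cpow (differentiableAt_const _) hslit)).const_mul _).cexp
    have d2 : DifferentiableAt ℂ (fun w => h w ^ (-(1:ℂ)/2)) z :=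
      hh.cpow (differentiableAt_const _) hslit
    have d3 : DifferentiableAt ℂ (fun w => Complex.exp (-I * c * w)) z :=
      (differentiableAt_id.const_mul _).cexp
    rw [hFdef]
    exact (d1.mul d2).mul d3
  -- integrability on horizontal lines in the strip
  have hint : ∀ y₀ : ℝ, |y₀| ≤ |δ| → Integrable (fun x : ℝ => F ((x:ℂ) + (y₀:ℂ) * I)) := by
    intro y₀ hy₀
    refine integrable_of_exp_decay ?_ (k := γ * lam) (by positivity) (C := C) ?_
    · rw [continuous_iff_continuousAt]
      intro x
      have him : ((x:ℂ) + (y₀:ℂ) * I).im = y₀ := by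
        simp
      refine ((hdiff _ (by rw [him]; exact hy₀)).continuousAt).comp ?_
      exact (Complex.continuous_ofReal.add continuous_const).continuousAt
    · intro x
      exact hnormF x y₀ hy₀
  have huIcc : ∀ y ∈ Set.uIcc (-δ) 0, |y| ≤ |δ| := by
    intro y hy
    have := abs_le_abs_of_mem_uIcc_zero hy
    rwa [abs_neg] at this
  -- contour shift
  have hshift : (∫ x : ℝ, F ((x:ℂ) + ((-δ : ℝ):ℂ) * I)) = ∫ x : ℝ, F ((x:ℂ) + ((0:ℝ):ℂ) * I) := by
    refine contour_shift (B := fun t => C * Real.exp (-(γ * lam) * t)) ?_ ?_ ?_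
      (hint (-δ) (by rw [abs_neg])) (hint 0 (by simp))
    · intro z hz
      exact hdiff z (huIcc z.im hz)
    · intro x y hy
      exact hnormF x y (huIcc y hy)
    · have h1 : Tendsto (fun t : ℝ => (γ * lam) * t) atTop atTop :=
        Tendsto.const_mul_atTop (by positivity) tendsto_id
      have h2 : Tendsto (fun t : ℝ => -((γ * lam) * t)) atTop atBot :=
        tendsto_neg_atBot_iff.mpr h1
      have h3 := Real.tendsto_exp_atBot.comp h2
      have h4 : (fun t : ℝ => C * Real.exp (-(γ * lam) * t))
          = fun t : ℝ => C * (Real.exp ∘ fun t : ℝ => -((γ * lam) * t)) t := by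
        funext t; simp [Function.comp, neg_mul]
      rw [h4]
      simpa using h3.const_mul C
  -- pointwise identity relating the statement integrand to F on the line Im = -δ
  have hpoint : ∀ s : ℝ,
      Complex.exp (-(γ : ℂ) *
          (((lam : ℂ) ^ 2 * ((s : ℂ) - Complex.I * δ) ^ 2 + (α : ℂ) ^ 2) ^ ((1 : ℂ) / 2))) *
        (((lam : ℂ) ^ 2 * ((s : ℂ) - Complex.I * δ) ^ 2 + (α : ℂ) ^ 2) ^ (-(1 : ℂ) / 2)) *
        Complex.exp (-Complex.I * c * s)
      = (Real.exp (c * δ) : ℂ) * F ((s:ℂ) + ((-δ : ℝ):ℂ) * I) := by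
    intro s
    have hz : (s:ℂ) + ((-δ : ℝ):ℂ) * I = (s:ℂ) - Complex.I * δ := by push_cast; ring
    rw [hFdef]
    simp only [hz, hhdef]
    have e1 : Complex.exp (-I * (c:ℂ) * ((s:ℂ) - Complex.I * δ))
        = Complex.exp (-I * c * s) * Complex.exp (-((c * δ : ℝ) : ℂ)) := by
      rw [← Complex.exp_add]
      congr 1
      have : Complex.I * Complex.I = -1 := Complex.I_mul_I
      push_cast
      linear_combination (↑c : ℂ) * (↑δ : ℂ) * this
    rw [e1, Complex.ofReal_exp]
    have e2 : Complex.exp ((c * δ : ℝ) : ℂ) * Complex.exp (-((c * δ : ℝ) : ℂ)) = 1 := by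
      rw [← Complex.exp_add]; simp
    set A := Complex.exp (-(γ : ℂ) *
      (((lam : ℂ) ^ 2 * ((s : ℂ) - Complex.I * δ) ^ 2 + (α : ℂ) ^ 2) ^ ((1 : ℂ) / 2)))
    set Bq := ((lam : ℂ) ^ 2 * ((s : ℂ) - Complex.I * δ) ^ 2 + (α : ℂ) ^ 2) ^ (-(1 : ℂ) / 2)
    calc A * Bq * Complex.exp (-I * c * s)
        = (Complex.exp ((c * δ : ℝ) : ℂ) * Complex.exp (-((c * δ : ℝ) : ℂ))) *
            (A * Bq * Complex.exp (-I * c * s)) := by rw [e2, one_mul]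
      _ = Complex.exp ((c * δ : ℝ) : ℂ) *
            (A * Bq * (Complex.exp (-I * ↑c * ↑s) * Complex.exp (-((c * δ : ℝ) : ℂ)))) := by
          ring
  -- the value of F on the real line
  have hFreal : ∀ x : ℝ, F ((x:ℂ) + ((0:ℝ):ℂ) * I)
      = Complex.exp (-(γ:ℂ) * ((Real.sqrt (lam^2 * x^2 + α^2) : ℝ) : ℂ)) *
        (((Real.sqrt (lam^2 * x^2 + α^2) : ℝ) : ℂ))⁻¹ * Complex.exp (-I * c * x) := by
    intro x
    have hx0 : (x:ℂ) + ((0:ℝ):ℂ) * I = (x:ℂ) := by simp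
    have hP : (0:ℝ) ≤ lam^2 * x^2 + α^2 := by positivity
    have hhx : h ((x:ℂ)) = (((lam^2 * x^2 + α^2 : ℝ)) : ℂ) := by
      rw [hhdef]; push_cast; ring
    rw [hFdef]
    simp only [hx0, hhx]
    rw [ofReal_cpow_half hP, ofReal_cpow_neg_half hP]
  -- substitution x = (α/lam) sinh t
  set φ : ℝ → ℝ := fun t => (α/lam) * Real.sinh t with hφdef
  have hαlam : 0 < α / lam := by positivity
  have hφim : φ '' univ = univ := by
    rw [Set.image_univ, Set.range_eq_univ]
    intro y
    obtain ⟨t, ht⟩ := Real.sinh_surjective (y * (lam / α))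
    refine ⟨t, ?_⟩
    rw [hφdef]
    simp only
    rw [ht]
    field_simp
  have hφdd : ∀ t ∈ (univ : Set ℝ), HasDerivWithinAt φ ((α/lam) * Real.cosh t) univ t :=
    fun t _ => ((Real.hasDerivAt_sinh t).const_mul (α/lam)).hasDerivWithinAt
  have hφinj : Set.InjOn φ univ := by
    intro a _ b _ hab
    rw [hφdef] at hab
    simp only at hab
    exact Real.sinh_injective (mul_left_cancel₀ hαlam.ne' hab)
  have hsub := integral_image_eq_integral_abs_deriv_smul MeasurableSet.univ hφdd hφinj
    (fun x : ℝ => F ((x:ℂ) + ((0:ℝ):ℂ) * I))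
  rw [hφim] at hsub
  -- simplify the substituted integrand
  have hintegrand : ∀ t : ℝ, |(α/lam) * Real.cosh t| • F (((φ t : ℝ):ℂ) + ((0:ℝ):ℂ) * I)
      = (1/(lam:ℂ)) * Complex.exp (-((γ * α : ℝ):ℂ) * Complex.cosh t
          - I * ((c * α / lam : ℝ):ℂ) * Complex.sinh t) := by
    intro t
    have hch : (0:ℝ) < Real.cosh t := Real.cosh_pos t
    have hP : lam^2 * (φ t)^2 + α^2 = (α * Real.cosh t)^2 := by
      rw [hφdef]
      simp only
      have := Real.cosh_sq t
      field_simp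
      nlinarith [Real.cosh_sq t]
    have hsqrt : Real.sqrt (lam^2 * (φ t)^2 + α^2) = α * Real.cosh t := by
      rw [hP, Real.sqrt_sq (by positivity)]
    rw [hFreal (φ t), hsqrt]
    have habs : |(α/lam) * Real.cosh t| = (α/lam) * Real.cosh t :=
      abs_of_pos (by positivity)
    rw [habs, Complex.real_smul]
    have hfact : (((α/lam) * Real.cosh t : ℝ) : ℂ) * (((α * Real.cosh t : ℝ) : ℂ))⁻¹
        = 1/(lam:ℂ) := by
      rw [← Complex.ofReal_inv, ← Complex.ofReal_mul]
      rw [show (α/lam) * Real.cosh t * (α * Real.cosh t)⁻¹ = 1/lam by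
        field_simp]
      push_cast
      ring
    have hexp : Complex.exp (-(γ:ℂ) * ((α * Real.cosh t : ℝ):ℂ)) *
          Complex.exp (-I * (c:ℂ) * ((φ t : ℝ):ℂ))
        = Complex.exp (-((γ * α : ℝ):ℂ) * Complex.cosh t
            - I * ((c * α / lam : ℝ):ℂ) * Complex.sinh t) := by
      rw [← Complex.exp_add]
      congr 1
      rw [hφdef]
      simp only
      push_cast [Complex.ofReal_cosh, Complex.ofReal_sinh]
      field_simp
      ring
    calc (((α/lam) * Real.cosh t : ℝ) : ℂ) *
          (Complex.exp (-(γ:ℂ) * ((α * Real.cosh t : ℝ):ℂ)) *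
            (((α * Real.cosh t : ℝ) : ℂ))⁻¹ * Complex.exp (-I * (c:ℂ) * ((φ t : ℝ):ℂ)))
        = ((((α/lam) * Real.cosh t : ℝ) : ℂ) * (((α * Real.cosh t : ℝ) : ℂ))⁻¹) *
            (Complex.exp (-(γ:ℂ) * ((α * Real.cosh t : ℝ):ℂ)) *
              Complex.exp (-I * (c:ℂ) * ((φ t : ℝ):ℂ))) := by push_cast; ring
      _ = (1/(lam:ℂ)) * Complex.exp (-((γ * α : ℝ):ℂ) * Complex.cosh t
            - I * ((c * α / lam : ℝ):ℂ) * Complex.sinh t) := by rw [hfact, hexp]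
  -- the Bessel integral
  have hbessel := integral_exp_neg_cosh_sub_I_sinh (γ * α) (c * α / lam) (by positivity)
  have hr : Real.sqrt ((γ * α)^2 + (c * α / lam)^2)
      = (α / lam) * Real.sqrt (γ^2 * lam^2 + c^2) := by
    rw [show (γ * α)^2 + (c * α / lam)^2 = (α/lam)^2 * (γ^2 * lam^2 + c^2) by
      field_simp]
    rw [Real.sqrt_mul (sq_nonneg _), Real.sqrt_sq (by positivity)]
  -- assemble
  calc (∫ s : ℝ,
        Complex.exp (-(γ : ℂ) *
          (((lam : ℂ) ^ 2 * ((s : ℂ) - Complex.I * δ) ^ 2 + (α : ℂ) ^ 2) ^ ((1 : ℂ) / 2))) *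
        (((lam : ℂ) ^ 2 * ((s : ℂ) - Complex.I * δ) ^ 2 + (α : ℂ) ^ 2) ^ (-(1 : ℂ) / 2)) *
        Complex.exp (-Complex.I * c * s))
      = ∫ s : ℝ, (Real.exp (c * δ) : ℂ) * F ((s:ℂ) + ((-δ : ℝ):ℂ) * I) := by
        congr 1; funext s; exact hpoint s
    _ = (Real.exp (c * δ) : ℂ) * ∫ s : ℝ, F ((s:ℂ) + ((-δ : ℝ):ℂ) * I) :=
        integral_const_mul _ _
    _ = (Real.exp (c * δ) : ℂ) * ∫ x : ℝ, F ((x:ℂ) + ((0:ℝ):ℂ) * I) := by rw [hshift]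
    _ = (Real.exp (c * δ) : ℂ) *
          ∫ t : ℝ, |(α/lam) * Real.cosh t| • F (((φ t : ℝ):ℂ) + ((0:ℝ):ℂ) * I) := by
        rw [← setIntegral_univ, hsub, setIntegral_univ]
    _ = (Real.exp (c * δ) : ℂ) * ∫ t : ℝ, (1/(lam:ℂ)) *
          Complex.exp (-((γ * α : ℝ):ℂ) * Complex.cosh t
            - I * ((c * α / lam : ℝ):ℂ) * Complex.sinh t) := by
        congr 1; congr 1; funext t; exact hintegrand t
    _ = (Real.exp (c * δ) : ℂ) * ((1/(lam:ℂ)) *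
          (2 * besselK0 (Real.sqrt ((γ * α)^2 + (c * α / lam)^2)))) := by
        rw [integral_const_mul, hbessel]
    _ = (2 / (lam : ℂ)) * (Real.exp (c * δ) : ℂ) *
          besselK0 (((α / lam) * Real.sqrt (γ ^ 2 * lam ^ 2 + c ^ 2) : ℝ) : ℂ) := by
        rw [hr]
        ring
end
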